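/- Let u : ℤ → ℝ → ℝ be differentiable in t and nonvanishing, satisfying at every site the lattice equation u' = u·(1−u/u₂)(1−u₋₁/u)/(1−u/u₁) + u·(1−u₋₂/u)(1−u/u₁)/(1−u₋₁/u) (with all denominators nonzero). Define w(n,t) := u(n,t)/u(n+1,t) − 1. Then w satisfies w' = (w+1)( w₂(1/w₁+1)w − w(1/w₋₁+1)w₋₂ + w₁ − w₋₁ ). -/

import Mathlib

set_option maxHeartbeats 1600000 in
lemma alg_key (a b c d e f : ℝ) (hb : b ≠ 0) (hc : c ≠ 0) (hd : d ≠ 0)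
    (he : e ≠ 0) (hf : f ≠ 0)
    (h1 : 1 - c / d ≠ 0) (h2 : 1 - d / e ≠ 0) (h3 : 1 - b / c ≠ 0) :
    (c / d - 1 + 1) * ((e / f - 1) * (1 / (d / e - 1) + 1) * (c / d - 1)
        - (c / d - 1) * (1 / (b / c - 1) + 1) * (a / b - 1)
        + (d / e - 1) - (b / c - 1))
      = ((c * (1 - c / e) * (1 - b / c) / (1 - c / d)
            + c * (1 - a / c) * (1 - c / d) / (1 - b / c)) * d
          - c * (d * (1 - d / f) * (1 - c / d) / (1 - d / e)
            + d * (1 - b / d) * (1 - d / e) / (1 - c / d))) / d ^ 2 := by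
  have h2' : d / e - 1 ≠ 0 := fun h => h2 (by linarith [sub_eq_zero.mp h])
  have h3' : b / c - 1 ≠ 0 := fun h => h3 (by linarith [sub_eq_zero.mp h])
  have hcd : c ≠ d := fun h => h1 (by rw [h]; field_simp; norm_num)
  have hde : d ≠ e := fun h => h2 (by rw [h]; field_simp; norm_num)
  have hbc : b ≠ c := fun h => h3 (by rw [h]; field_simp; norm_num)
  have k1 : c - d ≠ 0 := sub_ne_zero.mpr hcd
  have k1' : d - c ≠ 0 := sub_ne_zero.mpr hcd.symm
  have k2 : d - e ≠ 0 := sub_ne_zero.mpr hde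
  have k2' : e - d ≠ 0 := sub_ne_zero.mpr hde.symm
  have k3 : b - c ≠ 0 := sub_ne_zero.mpr hbc
  have k3' : c - b ≠ 0 := sub_ne_zero.mpr hbc.symm
  field_simp
  ring

/-- Substitution w = u/u₁ − 1 maps solutions of lattice equation (f) to solutions
of the universal equation (wt). -/
theorem stmt2 (u : ℤ → ℝ → ℝ)
    (hne : ∀ (n : ℤ) (t : ℝ), u n t ≠ 0)
    (hd1 : ∀ (n : ℤ) (t : ℝ), 1 - u n t / u (n + 1) t ≠ 0)
    (hd2 : ∀ (n : ℤ) (t : ℝ), 1 - u (n - 1) t / u n t ≠ 0)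
    (hu : ∀ (n : ℤ) (t : ℝ), HasDerivAt (u n)
      (u n t * (1 - u n t / u (n + 2) t) * (1 - u (n - 1) t / u n t)
          / (1 - u n t / u (n + 1) t)
        + u n t * (1 - u (n - 2) t / u n t) * (1 - u n t / u (n + 1) t)
          / (1 - u (n - 1) t / u n t)) t)
    (w : ℤ → ℝ → ℝ) (hw : ∀ (n : ℤ) (t : ℝ), w n t = u n t / u (n + 1) t - 1)
    (n : ℤ) (t : ℝ) (h1 : w (n + 1) t ≠ 0) (hm1 : w (n - 1) t ≠ 0) :
    HasDerivAt (w n)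
      ((w n t + 1) * (w (n + 2) t * (1 / w (n + 1) t + 1) * w n t
        - w n t * (1 / w (n - 1) t + 1) * w (n - 2) t
        + w (n + 1) t - w (n - 1) t)) t := by
  have key : w n = fun s => u n s / u (n + 1) s - 1 := funext fun s => hw n s
  have hDu := hu n t
  have hDu1 := hu (n + 1) t
  have e1 : n + 1 + 2 = n + 3 := by ring
  have e2 : n + 1 - 1 = n := by ring
  have e3 : n + 1 + 1 = n + 2 := by ring
  have e4 : n + 1 - 2 = n - 1 := by ring
  rw [e1, e2, e3, e4] at hDu1
  have hdiv := (hDu.div hDu1 (hne (n + 1) t)).sub_const 1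
  rw [key]
  refine hdiv.congr_deriv (Eq.symm ?_)
  have hw1 := hw (n + 1) t
  have hwm1 := hw (n - 1) t
  have hw2 := hw (n + 2) t
  have hwm2 := hw (n - 2) t
  rw [e3] at hw1
  have e5 : n - 1 + 1 = n := by ring
  have e6 : n + 2 + 1 = n + 3 := by ring
  have e7 : n - 2 + 1 = n - 1 := by ring
  rw [e5] at hwm1
  rw [e6] at hw2
  rw [e7] at hwm2
  simp only [hw1, hwm1, hw2, hwm2]
  have A2 := hd1 (n + 1) t
  rw [e3] at A2
  exact alg_key (u (n - 2) t) (u (n - 1) t) (u n t) (u (n + 1) t) (u (n + 2) t)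
    (u (n + 3) t) (hne _ _) (hne _ _) (hne _ _) (hne _ _) (hne _ _)
    (hd1 n t) A2 (hd2 n t)
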